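/- Suppose à is a real k × n matrix with k ≤ n such that some subset of k of its columns forms the k × k identity matrix and every entry of à has absolute value at most 1. Then the spectral norm of à is at most sqrt(k(n-k)+1). -/

import Mathlib

open scoped Nat

/-- The Legendre polynomial of degree `l`, via Rodrigues' formula. -/
noncomputable def legendreP (l : ℕ) : ℝ → ℝ := fun x =>
  (1 / (2 ^ l * (l ! : ℝ))) * iteratedDeriv l (fun y : ℝ => (y ^ 2 - 1) ^ l) x

/-- The normalized associated Legendre function `P̄_l^m`. -/
noncomputable def nalf (m l : ℕ) : ℝ → ℝ := fun x =>
  Real.sqrt ((2 * l + 1) / 2 * ((l - m)! : ℝ) / ((l + m)! : ℝ)) *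
    (1 - x ^ 2) ^ ((m : ℝ) / 2) * iteratedDeriv m (legendreP l) x

/-- The spectral (l²-operator) norm of a real matrix. -/
noncomputable def specNorm {α β : Type*} [Fintype α] [Fintype β] [DecidableEq α] [DecidableEq β]
    (A : Matrix α β ℝ) : ℝ :=
  ‖LinearMap.toContinuousLinearMap (Matrix.toEuclideanLin A)‖

/-- The singular values of a real matrix, listed in decreasing order. -/
noncomputable def singularValues {p q : ℕ} (A : Matrix (Fin p) (Fin q) ℝ) : List ℝ :=
  List.insertionSort (· ≥ ·)
    (List.ofFn fun i => Real.sqrt ((show (Matrix.transpose A * A).IsHermitian by simpa [Matrix.conjTranspose_eq_transpose_of_trivial] using Matrix.isHermitian_conjTranspose_mul_self A).eigenvalues i))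

noncomputable def ccoef (m l : ℕ) : ℝ :=
  Real.sqrt ((((l : ℝ) - m + 1) * ((l : ℝ) - m + 2) * ((l : ℝ) + m + 1) * ((l : ℝ) + m + 2)) /
    ((2 * (l : ℝ) + 1) * (2 * (l : ℝ) + 3) ^ 2 * (2 * (l : ℝ) + 5)))

noncomputable def dcoef (m l : ℕ) : ℝ :=
  (2 * (l : ℝ) * ((l : ℝ) + 1) - 2 * (m : ℝ) ^ 2 - 1) /
    ((2 * (l : ℝ) - 1) * (2 * (l : ℝ) + 3))
theorem interp_matrix_norm_bound_one (k n : ℕ) (hkn : k ≤ n)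
    (At : Matrix (Fin k) (Fin n) ℝ)
    (hid : ∃ g : Fin k → Fin n, Function.Injective g ∧ At.submatrix id g = 1)
    (hent : ∀ i j, |At i j| ≤ 1) :
    specNorm At ≤ Real.sqrt ((k * (n - k) + 1 : ℕ)) := by
  classical
  obtain ⟨g, hg, hsub⟩ := hid
  rw [specNorm]
  apply ContinuousLinearMap.opNorm_le_bound _ (Real.sqrt_nonneg _)
  intro x
  set T : Finset (Fin n) := Finset.image g Finset.univ with hT
  set u : EuclideanSpace ℝ (Fin k) := WithLp.toLp 2 (fun i => x (g i)) with hu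
  set v : EuclideanSpace ℝ (Fin k) := WithLp.toLp 2 (fun i => ∑ j ∈ Tᶜ, At i j * x j) with hv
  have hentry : ∀ i i', At i (g i') = if i = i' then (1:ℝ) else 0 := by
    intro i i'
    have := congrFun (congrFun hsub i) i'
    simpa [Matrix.submatrix, Matrix.one_apply] using this
  have hrow : (LinearMap.toContinuousLinearMap (Matrix.toEuclideanLin At)) x = u + v := by
    ext i
    show ∑ j, At i j * x j = u i + v i
    rw [← Finset.sum_add_sum_compl T]
    congr 1
    rw [hT, Finset.sum_image (fun a _ b _ h => hg h)]
    simp [hentry, hu]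
  set a : ℝ := ‖u‖ with haa
  set b : ℝ := Real.sqrt (∑ j ∈ Tᶜ, x j ^ 2) with hbb
  have ha0 : 0 ≤ a := norm_nonneg _
  have hb0 : 0 ≤ b := Real.sqrt_nonneg _
  set M : ℝ := Real.sqrt ((k * (n - k) : ℕ) : ℝ) with hM
  have hM0 : 0 ≤ M := Real.sqrt_nonneg _
  have hMsq : M ^ 2 = ((k * (n - k) : ℕ) : ℝ) := Real.sq_sqrt (by positivity)
  have hcard : (Tᶜ.card : ℝ) = ((n - k : ℕ) : ℝ) := by
    rw [Finset.card_compl, hT, Finset.card_image_of_injective _ hg]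
    simp
  have hb2 : b ^ 2 = ∑ j ∈ Tᶜ, x j ^ 2 :=
    Real.sq_sqrt (Finset.sum_nonneg fun j _ => sq_nonneg _)
  have ha2 : a ^ 2 = ∑ i, x (g i) ^ 2 := by
    rw [haa, EuclideanSpace.norm_eq, Real.sq_sqrt (Finset.sum_nonneg fun i _ => sq_nonneg _)]
    simp [hu, sq_abs]
  -- ‖v‖ ≤ M * b
  have hvle : ‖v‖ ≤ M * b := by
    have hv2 : ‖v‖ ^ 2 ≤ (M * b) ^ 2 := by
      rw [EuclideanSpace.norm_eq, Real.sq_sqrt (Finset.sum_nonneg fun i _ => sq_nonneg _)]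
      calc ∑ i, ‖v i‖ ^ 2 ≤ ∑ _i : Fin k, ((n - k : ℕ) : ℝ) * b ^ 2 := by
            apply Finset.sum_le_sum
            intro i _
            rw [Real.norm_eq_abs, sq_abs, hv]
            calc (∑ j ∈ Tᶜ, At i j * x j) ^ 2
                ≤ (∑ j ∈ Tᶜ, (At i j) ^ 2) * (∑ j ∈ Tᶜ, x j ^ 2) :=
                  Finset.sum_mul_sq_le_sq_mul_sq _ _ _
              _ ≤ ((n - k : ℕ) : ℝ) * b ^ 2 := by
                  rw [hb2]
                  apply mul_le_mul_of_nonneg_right _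
                    (Finset.sum_nonneg fun j _ => sq_nonneg _)
                  calc ∑ j ∈ Tᶜ, (At i j) ^ 2 ≤ ∑ _j ∈ Tᶜ, (1:ℝ) := by
                        apply Finset.sum_le_sum
                        intro j _
                        calc (At i j) ^ 2 = |At i j| ^ 2 := (sq_abs _).symm
                          _ ≤ 1 := pow_le_one₀ (abs_nonneg _) (hent i j)
                    _ = (Tᶜ.card : ℝ) := by simp
                    _ = _ := hcard
        _ = (M * b) ^ 2 := by
            rw [Finset.sum_const, Finset.card_univ, Fintype.card_fin, mul_pow, hMsq]
            push_cast
            ring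
    have h := Real.sqrt_le_sqrt hv2
    rwa [Real.sqrt_sq (norm_nonneg v), Real.sqrt_sq (mul_nonneg hM0 hb0)] at h
  have hx2 : ‖x‖ ^ 2 = a ^ 2 + b ^ 2 := by
    rw [EuclideanSpace.norm_eq, Real.sq_sqrt (Finset.sum_nonneg fun j _ => sq_nonneg _),
      ha2, hb2]
    simp only [Real.norm_eq_abs, sq_abs]
    rw [← Finset.sum_add_sum_compl T (fun j => x j ^ 2)]
    congr 1
    rw [hT, Finset.sum_image (fun a' _ b' _ h => hg h)]
  have key : (a + M * b) ^ 2 ≤ ((k * (n - k) + 1 : ℕ) : ℝ) * ‖x‖ ^ 2 := by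
    have hMsq' : M ^ 2 = (k : ℝ) * ((n - k : ℕ) : ℝ) := by rw [hMsq]; push_cast; ring
    rw [hx2]
    push_cast
    nlinarith [sq_nonneg (M * a - b), hMsq', sq_nonneg a, sq_nonneg b]
  calc ‖(LinearMap.toContinuousLinearMap (Matrix.toEuclideanLin At)) x‖
      = ‖u + v‖ := by rw [hrow]
    _ ≤ a + ‖v‖ := norm_add_le _ _
    _ ≤ a + M * b := by linarith
    _ = Real.sqrt ((a + M * b) ^ 2) := (Real.sqrt_sq (by positivity)).symm
    _ ≤ Real.sqrt (((k * (n - k) + 1 : ℕ) : ℝ) * ‖x‖ ^ 2) := Real.sqrt_le_sqrt key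
    _ = Real.sqrt ((k * (n - k) + 1 : ℕ)) * ‖x‖ := by
        rw [Real.sqrt_mul (by positivity), Real.sqrt_sq (norm_nonneg _)]
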